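/- Let λ > 0, k ∈ ℕ and 0 ≤ p < 1/(λ+1), and let B_{k,p} be a binomial random variable with k trials and success probability p. Then P[B_{k,p} > k/(λ+1)] ≤ exp(−2k·(1/(λ+1) − p)²), and consequently the weighted risk μ_{λ,k}(p) = λ·p·P[B_{k,p} < k/(λ+1)] + (1−p)·P[B_{k,p} > k/(λ+1)] satisfies μ_{λ,k}(p) ≤ λ·p + (1 − (λ+1)·p)·exp(−2k·(1/(λ+1) − p)²). -/

import Mathlib

open Real Finset

lemma quarter_bound (u d : ℝ) (hd : 0 < d) : (u * d - u * u) / d ^ 2 ≤ 1 / 4 := by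
  rw [div_le_iff₀ (by positivity)]
  nlinarith [sq_nonneg (d - 2 * u)]

/-- Hoeffding's lemma for a Bernoulli-type mgf, for nonnegative `t`. -/
lemma hoeffding_pointwise (x : ℝ) (hx0 : 0 ≤ x) (hx1 : x < 1) (t : ℝ) (ht : 0 ≤ t) :
    1 + x * (Real.exp t - 1) ≤ Real.exp (x * t + t ^ 2 / 8) := by
  set D : ℝ → ℝ := fun s => 1 + x * (Real.exp s - 1) with hDdef
  have hD : ∀ s : ℝ, 0 < D s := by
    intro s
    have h1 : Real.exp s > 0 := Real.exp_pos s
    have : x * (Real.exp s - 1) ≥ x * (-1) :=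
      mul_le_mul_of_nonneg_left (by linarith) hx0
    simp only [hDdef]; nlinarith
  set g : ℝ → ℝ := fun s => x * s + s ^ 2 / 8 - Real.log (D s) with hgdef
  set g1 : ℝ → ℝ := fun s => x + s / 4 - x * Real.exp s / D s with hg1def
  set g2 : ℝ → ℝ := fun s =>
    1 / 4 - (x * Real.exp s * D s - x * Real.exp s * (x * Real.exp s)) / (D s) ^ 2 with hg2def
  have hDdv : ∀ s : ℝ, HasDerivAt D (x * Real.exp s) s := by
    intro s
    have := ((Real.hasDerivAt_exp s).sub_const 1).const_mul x
    exact this.const_add 1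
  have hgdv : ∀ s : ℝ, HasDerivAt g (g1 s) s := by
    intro s
    have h1 : HasDerivAt (fun s : ℝ => x * s + s ^ 2 / 8) (x + 2 * s / 8) s := by
      have := ((hasDerivAt_id s).const_mul x).add ((hasDerivAt_pow 2 s).div_const 8)
      exact this.congr_deriv (by simp)
    have h2 : HasDerivAt (fun s => Real.log (D s)) (x * Real.exp s / D s) s :=
      (hDdv s).log (hD s).ne'
    have := h1.sub h2
    exact this.congr_deriv (by simp only [hg1def]; ring)
  have hg1dv : ∀ s : ℝ, HasDerivAt g1 (g2 s) s := by
    intro s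
    have h1 : HasDerivAt (fun s : ℝ => x + s / 4) (1 / 4) s := by
      simpa using ((hasDerivAt_id s).div_const 4).const_add x
    have h2 : HasDerivAt (fun s => x * Real.exp s / D s)
        ((x * Real.exp s * D s - x * Real.exp s * (x * Real.exp s)) / (D s) ^ 2) s :=
      (((Real.hasDerivAt_exp s).const_mul x).div (hDdv s) (hD s).ne')
    exact h1.sub h2
  have hg2nonneg : ∀ s : ℝ, 0 ≤ g2 s := by
    intro s
    have hd := hD s
    rw [hg2def, sub_nonneg]
    exact quarter_bound (x * Real.exp s) (D s) hd
  have hg1mono : Monotone g1 := by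
    apply monotone_of_deriv_nonneg
    · exact fun s => (hg1dv s).differentiableAt
    · intro s; rw [(hg1dv s).deriv]; exact hg2nonneg s
  have hg10 : g1 0 = 0 := by simp [hg1def, hDdef]
  have hg1nonneg : ∀ s : ℝ, 0 ≤ s → 0 ≤ g1 s := fun s hs => hg10 ▸ hg1mono hs
  have hgdiff : Differentiable ℝ g := fun s => (hgdv s).differentiableAt
  have hgmono : MonotoneOn g (Set.Ici 0) := by
    apply monotoneOn_of_deriv_nonneg (convex_Ici 0)
    · exact hgdiff.continuous.continuousOn
    · exact hgdiff.differentiableOn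
    · intro s hs
      rw [interior_Ici] at hs
      rw [(hgdv s).deriv]
      exact hg1nonneg s hs.le
  have hg0 : g 0 = 0 := by simp [hgdef, hDdef]
  have hgt : 0 ≤ g t := hg0 ▸ hgmono (Set.mem_Ici.mpr le_rfl) ht ht
  have : Real.log (D t) ≤ x * t + t ^ 2 / 8 := by
    simp only [hgdef] at hgt; linarith
  rw [Real.log_le_iff_le_exp (hD t)] at this
  exact this


/-- `P[B_{k,p} < t]` for a binomial random variable `B_{k,p}` with `k` trials and
success probability `p`. -/
noncomputable def binomCdfLt (k : ℕ) (p : ℝ) (t : ℝ) : ℝ :=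
  ∑ m ∈ Finset.range (k + 1),
    if (m : ℝ) < t then (k.choose m : ℝ) * p ^ m * (1 - p) ^ (k - m) else 0

/-- `P[B_{k,p} > t]` for a binomial random variable `B_{k,p}` with `k` trials and
success probability `p`. -/
noncomputable def binomCdfGt (k : ℕ) (p : ℝ) (t : ℝ) : ℝ :=
  ∑ m ∈ Finset.range (k + 1),
    if (m : ℝ) > t then (k.choose m : ℝ) * p ^ m * (1 - p) ^ (k - m) else 0

/-- The asymptotic `λ`-weighted classification risk of the `k`-nearest-neighbor classifier
at a point with posterior probability `p` of class `P`:
`μ_{λ,k}(p) = λ·p·P[B_{k,p} < k/(λ+1)] + (1−p)·P[B_{k,p} > k/(λ+1)]`. -/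
noncomputable def knnWeightedRisk (l : ℝ) (k : ℕ) (p : ℝ) : ℝ :=
  l * p * binomCdfLt k p ((k : ℝ) / (l + 1)) + (1 - p) * binomCdfGt k p ((k : ℝ) / (l + 1))

/-- (Hoeffding bound for the binomial tail and the resulting bound on the
weighted kNN risk.) For `λ > 0`, `k ∈ ℕ` and `0 ≤ p < 1/(λ+1)`,
`P[B_{k,p} > k/(λ+1)] ≤ exp(−2k·(1/(λ+1) − p)²)`, and consequently
`μ_{λ,k}(p) ≤ λ·p + (1 − (λ+1)·p)·exp(−2k·(1/(λ+1) − p)²)`. -/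
theorem knnWeightedRisk_hoeffding_bound
    (l : ℝ) (hl : 0 < l) (k : ℕ) (p : ℝ) (hp0 : 0 ≤ p) (hp : p < 1 / (l + 1)) :
    binomCdfGt k p ((k : ℝ) / (l + 1)) ≤ Real.exp (-2 * k * (1 / (l + 1) - p) ^ 2) ∧
    knnWeightedRisk l k p
      ≤ l * p + (1 - (l + 1) * p) * Real.exp (-2 * k * (1 / (l + 1) - p) ^ 2) := by
  have h1l : (0:ℝ) < l + 1 := by linarith
  have hinv1 : 1 / (l + 1) < 1 := by
    rw [div_lt_one h1l]; linarith
  have hp1 : p < 1 := lt_trans hp hinv1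
  have h1p : (0:ℝ) < 1 - p := by linarith
  set ε : ℝ := 1 / (l + 1) - p with hε_def
  have hε : 0 < ε := by simp only [hε_def]; linarith
  set t : ℝ := 4 * ε with ht_def
  have ht : 0 < t := by positivity
  set a : ℝ := (k : ℝ) / (l + 1) with ha_def
  set w : ℕ → ℝ := fun m => (k.choose m : ℝ) * p ^ m * (1 - p) ^ (k - m) with hw_def
  have hw : ∀ m, 0 ≤ w m := by
    intro m
    apply mul_nonneg (mul_nonneg (by positivity) (by positivity))
    positivity
  -- step A
  have hA : binomCdfGt k p a ≤ ∑ m ∈ Finset.range (k + 1), w m * Real.exp (t * (m - a)) := by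
    unfold binomCdfGt
    apply Finset.sum_le_sum
    intro m _
    split_ifs with h
    · have h1 : 0 ≤ t * ((m : ℝ) - a) := mul_nonneg ht.le (by linarith)
      exact le_mul_of_one_le_right (hw m) (Real.one_le_exp h1)
    · exact mul_nonneg (hw m) (Real.exp_pos _).le
  -- step B
  have hB : ∑ m ∈ Finset.range (k + 1), w m * Real.exp (t * (m - a))
      = Real.exp (-(t * a)) * (p * Real.exp t + (1 - p)) ^ k := by
    rw [add_pow, Finset.mul_sum]
    apply Finset.sum_congr rfl
    intro m _
    have h1 : Real.exp (t * ((m : ℝ) - a)) = Real.exp ((m : ℝ) * t) * Real.exp (-(t * a)) := by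
      rw [← Real.exp_add]; congr 1; ring
    rw [h1, mul_pow, ← Real.exp_nat_mul]
    ring
  -- step C
  have hbase : p * Real.exp t + (1 - p) ≤ Real.exp (p * t + t ^ 2 / 8) := by
    have := hoeffding_pointwise p hp0 hp1 t ht.le
    linarith
  have hC : (p * Real.exp t + (1 - p)) ^ k ≤ Real.exp (p * t + t ^ 2 / 8) ^ k := by
    apply pow_le_pow_left₀ _ hbase
    have := Real.exp_pos t
    nlinarith
  -- step D
  have hD : Real.exp (-(t * a)) * Real.exp (p * t + t ^ 2 / 8) ^ k
      = Real.exp (-2 * k * ε ^ 2) := by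
    rw [← Real.exp_nat_mul, ← Real.exp_add]
    congr 1
    simp only [ht_def, ha_def, hε_def]
    field_simp
    ring
  have part1 : binomCdfGt k p a ≤ Real.exp (-2 * k * ε ^ 2) := by
    calc binomCdfGt k p a ≤ ∑ m ∈ Finset.range (k + 1), w m * Real.exp (t * (m - a)) := hA
      _ = Real.exp (-(t * a)) * (p * Real.exp t + (1 - p)) ^ k := hB
      _ ≤ Real.exp (-(t * a)) * Real.exp (p * t + t ^ 2 / 8) ^ k :=
          mul_le_mul_of_nonneg_left hC (Real.exp_pos _).le
      _ = Real.exp (-2 * k * ε ^ 2) := hD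
  refine ⟨part1, ?_⟩
  -- part 2
  have hsum1 : ∑ m ∈ Finset.range (k + 1), w m = 1 := by
    have h2 := add_pow p (1 - p) k
    have h3 : ∑ m ∈ Finset.range (k + 1), w m
        = ∑ m ∈ Finset.range (k + 1), p ^ m * (1 - p) ^ (k - m) * (k.choose m : ℝ) := by
      apply Finset.sum_congr rfl; intro m _; simp only [hw_def]; ring
    rw [h3, ← h2]
    norm_num
  have hLG : binomCdfLt k p a + binomCdfGt k p a ≤ 1 := by
    unfold binomCdfLt binomCdfGt
    rw [← Finset.sum_add_distrib]
    calc ∑ m ∈ Finset.range (k + 1),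
          ((if (m : ℝ) < a then (k.choose m : ℝ) * p ^ m * (1 - p) ^ (k - m) else 0) +
            (if (m : ℝ) > a then (k.choose m : ℝ) * p ^ m * (1 - p) ^ (k - m) else 0))
        ≤ ∑ m ∈ Finset.range (k + 1), w m := by
          apply Finset.sum_le_sum
          intro m _
          split_ifs with h1 h2
          · exact absurd (lt_trans h1 h2) (lt_irrefl _)
          · simpa [hw_def] using le_refl (w m)
          · simpa [hw_def] using le_refl (w m)
          · simpa using hw m
      _ = 1 := hsum1
  have hG0 : 0 ≤ binomCdfGt k p a := by
    unfold binomCdfGt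
    apply Finset.sum_nonneg
    intro m _
    split_ifs with h
    · exact hw m
    · exact le_rfl
  have hcoef : 0 ≤ 1 - (l + 1) * p := by
    have := (lt_div_iff₀ h1l).mp hp
    nlinarith
  unfold knnWeightedRisk
  set L := binomCdfLt k p a with hL_def
  set G := binomCdfGt k p a with hG_def
  set E := Real.exp (-2 * k * ε ^ 2) with hE_def
  have e1 : l * p * L ≤ l * p * (1 - G) :=
    mul_le_mul_of_nonneg_left (by linarith) (mul_nonneg hl.le hp0)
  have e2 : (1 - (l + 1) * p) * G ≤ (1 - (l + 1) * p) * E :=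
    mul_le_mul_of_nonneg_left part1 hcoef
  nlinarith [e1, e2]
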